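/- Let 𝔤 be a compact semisimple Lie algebra with B the negative of its Killing form, and let 𝔤 = 𝔪₀ + 𝔪₁ + 𝔪₂ be a B-orthogonal decomposition such that [𝔪₀, 𝔪₁] = 0 and 𝔪₀ + 𝔪₁ is a subalgebra. Define [i,j,k] = Σ (B([e_α,e_β],e_γ))² summed over B-orthonormal basis vectors e_α ∈ 𝔪ᵢ, e_β ∈ 𝔪ⱼ, e_γ ∈ 𝔪_k. Then [1,2,2] = dim 𝔪₁ - [1,1,1]. -/

import Mathlib

open LieAlgebra

section Aux

variable {g : Type*} [LieRing g] [LieAlgebra ℝ g] [Module.Finite ℝ g]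

private lemma killing_key_sum {ι : Type*} [Fintype ι] [DecidableEq ι] (f : ι → g)
    (horth : ∀ a b, -(killingForm ℝ g (f a) (f b)) = if a = b then (1 : ℝ) else 0)
    (hspan : Submodule.span ℝ (Set.range f) = ⊤) (x : g) :
    -(killingForm ℝ g x x) = ∑ a, ∑ c, (-(killingForm ℝ g ⁅x, f a⁆ (f c))) ^ 2 := by
  classical
  set B : LinearMap.BilinForm ℝ g := -(killingForm ℝ g) with hB
  have hBa : ∀ u v : g, B u v = -(killingForm ℝ g u v) := fun u v => by
    simp [hB, LinearMap.neg_apply]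
  have horthB : ∀ a b, B (f a) (f b) = if a = b then (1:ℝ) else 0 := fun a b => by
    rw [hBa]; exact horth a b
  have hBsymm : ∀ u v : g, B u v = B v u := fun u v => by
    rw [hBa, hBa, LieModule.traceForm_comm]
  have hli : LinearIndependent ℝ f := by
    rw [linearIndependent_iff']
    intro s c hc i hi
    have h := congrArg (fun y => B y (f i)) hc
    simp only [map_sum, LinearMap.coe_sum, Finset.sum_apply, map_smul,
      LinearMap.smul_apply, smul_eq_mul, horthB, mul_ite, mul_one, mul_zero,
      Finset.sum_ite_eq', map_zero, LinearMap.zero_apply, if_pos hi] at h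
    simpa using h
  set b : Module.Basis ι ℝ g := Module.Basis.mk hli (by rw [hspan]) with hb
  have hbapp : ∀ i, b i = f i := fun i => by rw [hb, Module.Basis.mk_apply]
  have hrepr : ∀ (y : g) a, b.repr y a = B y (f a) := by
    intro y a
    conv_rhs => rw [← b.sum_repr y]
    simp only [map_sum, LinearMap.coe_sum, Finset.sum_apply, map_smul,
      LinearMap.smul_apply, smul_eq_mul, hbapp, horthB, mul_ite, mul_one, mul_zero,
      Finset.sum_ite_eq', Finset.mem_univ, if_pos]
  have hκ : killingForm ℝ g x x = ∑ a, b.repr ⁅x, ⁅x, f a⁆⁆ a := by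
    rw [killingForm_apply_apply, LinearMap.trace_eq_matrix_trace ℝ b]
    simp [Matrix.trace, Matrix.diag, LinearMap.toMatrix_apply, hbapp, ad_apply]
  have hstep : ∀ a, b.repr ⁅x, ⁅x, f a⁆⁆ a = -(B ⁅x, f a⁆ ⁅x, f a⁆) := by
    intro a
    rw [hrepr, hBa, hBa, LieModule.traceForm_apply_lie_apply']
  have hBm : ∀ m : g, B m m = ∑ c, (B m (f c))^2 := by
    intro m
    have h := congrArg (fun y => B y m) (b.sum_repr m)
    simp only [map_sum, LinearMap.coe_sum, Finset.sum_apply, map_smul,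
      LinearMap.smul_apply, smul_eq_mul, hbapp] at h
    rw [← h]
    refine Finset.sum_congr rfl fun c _ => ?_
    rw [hrepr, hBsymm (f c) m, sq]
  have : -(killingForm ℝ g x x) = ∑ a, B ⁅x, f a⁆ ⁅x, f a⁆ := by
    rw [hκ, neg_eq_iff_eq_neg, ← Finset.sum_neg_distrib]
    exact Finset.sum_congr rfl fun a _ => by rw [hstep]
  rw [this]
  exact Finset.sum_congr rfl fun a _ => by
    rw [hBm]; exact Finset.sum_congr rfl fun c _ => by rw [hBa]

end Aux

/-- Let `𝔤` be a compact semisimple Lie algebra, `B = -κ`, and `𝔤 = 𝔪₀ + 𝔪₁ + 𝔪₂` a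
`B`-orthogonal decomposition with `[𝔪₀,𝔪₁] = 0` and `𝔪₀ + 𝔪₁` a subalgebra. With
`[i,j,k] = Σ (B([e_α,e_β],e_γ))²` over `B`-orthonormal bases `e_α ∈ 𝔪ᵢ`, `e_β ∈ 𝔪ⱼ`,
`e_γ ∈ 𝔪_k`, we have `[1,2,2] = dim 𝔪₁ - [1,1,1]`. -/
theorem stmt7 {g : Type*} [LieRing g] [LieAlgebra ℝ g] [Module.Finite ℝ g]
    (hneg : ∀ x : g, x ≠ 0 → killingForm ℝ g x x < 0)
    (m0 m1 m2 : Submodule ℝ g)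
    (htop : m0 ⊔ m1 ⊔ m2 = ⊤)
    (horth01 : ∀ x ∈ m0, ∀ y ∈ m1, killingForm ℝ g x y = 0)
    (horth02 : ∀ x ∈ m0, ∀ y ∈ m2, killingForm ℝ g x y = 0)
    (horth12 : ∀ x ∈ m1, ∀ y ∈ m2, killingForm ℝ g x y = 0)
    (hcomm : ∀ x ∈ m0, ∀ y ∈ m1, ⁅x, y⁆ = (0 : g))
    (hsub : ∀ x ∈ m0 ⊔ m1, ∀ y ∈ m0 ⊔ m1, ⁅x, y⁆ ∈ m0 ⊔ m1)
    (d0 d1 d2 : ℕ)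
    (e0 : Fin d0 → g) (he0 : ∀ i, e0 i ∈ m0)
    (horthb0 : ∀ i j, -(killingForm ℝ g (e0 i) (e0 j)) = if i = j then (1 : ℝ) else 0)
    (hspan0 : Submodule.span ℝ (Set.range e0) = m0)
    (e1 : Fin d1 → g) (he1 : ∀ i, e1 i ∈ m1)
    (horthb1 : ∀ i j, -(killingForm ℝ g (e1 i) (e1 j)) = if i = j then (1 : ℝ) else 0)
    (hspan1 : Submodule.span ℝ (Set.range e1) = m1)
    (e2 : Fin d2 → g) (he2 : ∀ i, e2 i ∈ m2)
    (horthb2 : ∀ i j, -(killingForm ℝ g (e2 i) (e2 j)) = if i = j then (1 : ℝ) else 0)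
    (hspan2 : Submodule.span ℝ (Set.range e2) = m2) :
    (∑ i, ∑ j, ∑ l, (-(killingForm ℝ g ⁅e1 i, e2 j⁆ (e2 l))) ^ 2)
      = (d1 : ℝ) - ∑ i, ∑ j, ∑ l, (-(killingForm ℝ g ⁅e1 i, e1 j⁆ (e1 l))) ^ 2 := by
  classical
  have hκsymm : ∀ u v : g, killingForm ℝ g u v = killingForm ℝ g v u := fun u v =>
    LieModule.traceForm_comm ℝ g g u v
  have horth : ∀ a b : Fin d0 ⊕ (Fin d1 ⊕ Fin d2),
      -(killingForm ℝ g (Sum.elim e0 (Sum.elim e1 e2) a) (Sum.elim e0 (Sum.elim e1 e2) b))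
        = if a = b then (1 : ℝ) else 0 := by
    rintro (a | a | a) (b | b | b)
    · simpa using horthb0 a b
    · simp [horth01 _ (he0 a) _ (he1 b)]
    · simp [horth02 _ (he0 a) _ (he2 b)]
    · simp only [Sum.elim_inl, Sum.elim_inr]; rw [hκsymm]
      simp [horth01 _ (he0 b) _ (he1 a)]
    · simpa using horthb1 a b
    · simp [horth12 _ (he1 a) _ (he2 b)]
    · simp only [Sum.elim_inl, Sum.elim_inr]; rw [hκsymm]
      simp [horth02 _ (he0 b) _ (he2 a)]
    · simp only [Sum.elim_inl, Sum.elim_inr]; rw [hκsymm]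
      simp [horth12 _ (he1 b) _ (he2 a)]
    · simpa using horthb2 a b
  have hspan : Submodule.span ℝ (Set.range (Sum.elim e0 (Sum.elim e1 e2))) = ⊤ := by
    rw [Set.Sum.elim_range, Set.Sum.elim_range, Submodule.span_union, Submodule.span_union,
      hspan0, hspan1, hspan2, ← sup_assoc, htop]
  have hlie10 : ∀ (i : Fin d1) (j : Fin d0), ⁅e1 i, e0 j⁆ = (0 : g) := fun i j => by
    rw [← lie_skew, hcomm _ (he0 j) _ (he1 i), neg_zero]
  have hγ0 : ∀ (i : Fin d1) (y : g) (k : Fin d0),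
      killingForm ℝ g ⁅e1 i, y⁆ (e0 k) = 0 := fun i y k => by
    rw [LieModule.traceForm_apply_lie_apply', hlie10 i k, map_zero, neg_zero]
  have horthsup : ∀ z ∈ m0 ⊔ m1, ∀ l, killingForm ℝ g z (e2 l) = 0 := by
    intro z hz l
    obtain ⟨a, ha, c, hc, rfl⟩ := Submodule.mem_sup.mp hz
    rw [map_add, LinearMap.add_apply, horth02 a ha _ (he2 l), horth12 c hc _ (he2 l), add_zero]
  have hmem : ∀ i j : Fin d1, ⁅e1 i, e1 j⁆ ∈ m0 ⊔ m1 := fun i j =>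
    hsub _ (Submodule.mem_sup_right (he1 i)) _ (Submodule.mem_sup_right (he1 j))
  have h112 : ∀ (i j : Fin d1) (l : Fin d2),
      killingForm ℝ g ⁅e1 i, e1 j⁆ (e2 l) = 0 := fun i j l => horthsup _ (hmem i j) l
  have h121 : ∀ (i : Fin d1) (j : Fin d2) (l : Fin d1),
      killingForm ℝ g ⁅e1 i, e2 j⁆ (e1 l) = 0 := fun i j l => by
    rw [LieModule.traceForm_apply_lie_apply', LieModule.traceForm_comm,
      horthsup _ (hmem i l) j, neg_zero]
  have hsum : (d1 : ℝ) = ∑ i : Fin d1, ∑ a, ∑ c,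
      (-(killingForm ℝ g ⁅e1 i, Sum.elim e0 (Sum.elim e1 e2) a⁆
        (Sum.elim e0 (Sum.elim e1 e2) c))) ^ 2 := by
    calc (d1 : ℝ) = ∑ i : Fin d1, -(killingForm ℝ g (e1 i) (e1 i)) := by simp [horthb1]
      _ = _ := Finset.sum_congr rfl fun i _ => killing_key_sum _ horth hspan (e1 i)
  simp only [Fintype.sum_sum_type, Sum.elim_inl, Sum.elim_inr, hlie10, map_zero,
    LinearMap.zero_apply, neg_zero, zero_pow, hγ0, h112, h121, Finset.sum_const_zero,
    add_zero, zero_add, ne_eq, OfNat.ofNat_ne_zero, not_false_eq_true,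
    Finset.sum_add_distrib] at hsum
  linarith [hsum]
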